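/- Let (W,S) be a Coxeter system with set of reflections T, alternating subgroup W^+, and fix s_0 ∈ S. Then the absolute order Abs_0(W^+) on W^+ is isomorphic as a poset to the absolute order Abs(W/⟨s_0⟩) on the set of left cosets of the subgroup ⟨s_0⟩ generated by s_0. An isomorphism is given by φ(w) = w⟨s_0⟩ if ℓ_{T_0}(w) is even and φ(w) = s_0 w s_0 ⟨s_0⟩ if ℓ_{T_0}(w) is odd. -/

import Mathlib

attribute [local instance] Classical.propDecidable

/-- The absolute length of `w` with respect to a set `T`: the minimum length of a word
for `w` in the alphabet `T`. -/
noncomputable def absLength {W : Type*} [Group W] (T : Set W) (w : W) : ℕ :=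
  sInf {n | ∃ l : List W, (∀ t ∈ l, t ∈ T) ∧ l.prod = w ∧ l.length = n}

/-- The set of reflections `T` of a Coxeter system. -/
def reflSet {B W : Type*} [Group W] {M : CoxeterMatrix B} (cs : CoxeterSystem M W) :
    Set W := {t | cs.IsReflection t}

/-- The set `T₀ = {s₀ t : t ∈ T}`. -/
def tZero {B W : Type*} [Group W] {M : CoxeterMatrix B} (cs : CoxeterSystem M W)
    (i₀ : B) : Set W := {w | ∃ t, cs.IsReflection t ∧ w = cs.simple i₀ * t}

/-- The alternating subgroup `W⁺` of a Coxeter system: the kernel of the sign character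
(which maps every simple reflection to `−1`). -/
def alternating {B W : Type*} [Group W] {M : CoxeterMatrix B} (cs : CoxeterSystem M W) :
    Subgroup W := cs.lengthParity.ker

/-- The absolute length of a left coset `x ∈ W/H`: the minimum of `ℓ_T` over `x`. -/
noncomputable def cosetLength {W : Type*} [Group W] (T : Set W) (H : Subgroup W)
    (x : W ⧸ H) : ℕ :=
  sInf {n | ∃ w : W, (w : W ⧸ H) = x ∧ absLength T w = n}

/-- The absolute order on `X = W/H` : `x ≤_T y` iff `y = w x` for some `w ∈ W` with
`ℓ_T(w) = ℓ_T(y) − ℓ_T(x)`. -/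
def cosetLe {W : Type*} [Group W] (T : Set W) (H : Subgroup W) (x y : W ⧸ H) : Prop :=
  ∃ w : W, y = w • x ∧ cosetLength T H x + absLength T w = cosetLength T H y

/-- The absolute order `Abs₀(W⁺)` on the alternating subgroup: the reflexive and
transitive closure of the relation consisting of the pairs `(u,v)` of elements of `W⁺`
with `v = τ u` for some `τ ∈ T₀` and `ℓ_{T₀}(u) < ℓ_{T₀}(v)`. -/
def altLe {B W : Type*} [Group W] {M : CoxeterMatrix B} (cs : CoxeterSystem M W)
    (i₀ : B) (u v : W) : Prop :=
  Relation.ReflTransGen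
    (fun a b => a ∈ alternating cs ∧ b ∈ alternating cs ∧
      ∃ τ ∈ tZero cs i₀, b = τ * a ∧
        absLength (tZero cs i₀) a < absLength (tZero cs i₀) b)
    u v

namespace AbsIsoAux

open CoxeterSystem Multiplicative List

variable {B W : Type*} [Group W] {M : CoxeterMatrix B} (cs : CoxeterSystem M W) (i₀ : B)

/-! ### Generic `absLength` lemmas -/

theorem absLength_le {T : Set W} {w : W} (l : List W) (hl : ∀ t ∈ l, t ∈ T)
    (hp : l.prod = w) : absLength T w ≤ l.length :=
  Nat.sInf_le ⟨l, hl, hp, rfl⟩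

theorem absLength_exists {T : Set W} {w : W} (l₀ : List W) (hl₀ : ∀ t ∈ l₀, t ∈ T)
    (hp₀ : l₀.prod = w) :
    ∃ l : List W, (∀ t ∈ l, t ∈ T) ∧ l.prod = w ∧ l.length = absLength T w :=
  Nat.sInf_mem (⟨l₀.length, l₀, hl₀, hp₀, rfl⟩ :
    {n | ∃ l : List W, (∀ t ∈ l, t ∈ T) ∧ l.prod = w ∧ l.length = n}.Nonempty)

theorem absLength_one (T : Set W) : absLength T (1 : W) = 0 :=
  Nat.le_zero.mp (absLength_le [] (by simp) rfl)

/-! ### reflSet basics -/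

theorem refl_exists (w : W) :
    ∃ l : List W, (∀ t ∈ l, t ∈ reflSet cs) ∧ l.prod = w := by
  obtain ⟨ω, rfl⟩ := cs.wordProd_surjective w
  refine ⟨ω.map cs.simple, ?_, rfl⟩
  intro t ht
  obtain ⟨i, _, rfl⟩ := List.mem_map.mp ht
  exact cs.isReflection_simple i

theorem refl_attained (w : W) :
    ∃ l : List W, (∀ t ∈ l, t ∈ reflSet cs) ∧ l.prod = w ∧
      l.length = absLength (reflSet cs) w := by
  obtain ⟨l, hl, hp⟩ := refl_exists cs w
  exact absLength_exists l hl hp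

theorem absLength_refl_mul_le (u v : W) :
    absLength (reflSet cs) (u * v) ≤
      absLength (reflSet cs) u + absLength (reflSet cs) v := by
  obtain ⟨l, hl, hp, hlen⟩ := refl_attained cs u
  obtain ⟨m, hm, hq, hmlen⟩ := refl_attained cs v
  have := absLength_le (T := reflSet cs) (l ++ m) (by
    intro t ht
    rcases List.mem_append.mp ht with h | h
    · exact hl t h
    · exact hm t h) (by rw [List.prod_append, hp, hq])
  simpa [hlen, hmlen] using this

theorem prod_map_conj (x : W) (l : List W) :
    (l.map fun t => x * t * x⁻¹).prod = x * l.prod * x⁻¹ := by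
  induction l with
  | nil => simp
  | cons a l ih => rw [List.map_cons, List.prod_cons, ih, List.prod_cons]; group

theorem absLength_refl_conj (x w : W) :
    absLength (reflSet cs) (x * w * x⁻¹) = absLength (reflSet cs) w := by
  have key : ∀ y v : W,
      absLength (reflSet cs) (y * v * y⁻¹) ≤ absLength (reflSet cs) v := by
    intro y v
    obtain ⟨l, hl, hp, hlen⟩ := refl_attained cs v
    have := absLength_le (T := reflSet cs) (l.map fun t => y * t * y⁻¹) (by
      intro t ht
      obtain ⟨a, ha, rfl⟩ := List.mem_map.mp ht
      exact (hl a ha).conj y) (by rw [prod_map_conj, hp])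
    simpa [hlen] using this
  refine le_antisymm (key x w) ?_
  have h2 : x⁻¹ * (x * w * x⁻¹) * x⁻¹⁻¹ = w := by group
  have := key x⁻¹ (x * w * x⁻¹)
  rwa [h2] at this

/-! ### Parity -/

theorem refl_lengthParity {t : W} (ht : cs.IsReflection t) :
    cs.lengthParity t = Multiplicative.ofAdd 1 := by
  obtain ⟨w, i, rfl⟩ := ht
  rw [map_mul, map_mul, map_inv, cs.lengthParity_simple,
    mul_comm (cs.lengthParity w), mul_assoc, mul_inv_cancel, mul_one]

theorem parity_prod {l : List W} (hl : ∀ t ∈ l, t ∈ reflSet cs) :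
    cs.lengthParity l.prod = Multiplicative.ofAdd ((l.length : ZMod 2)) := by
  induction l with
  | nil => simp
  | cons a l ih =>
    rw [List.prod_cons, map_mul, refl_lengthParity cs (hl a (List.mem_cons_self)),
      ih (fun t ht => hl t (List.mem_cons_of_mem _ ht)), ← ofAdd_add]
    congr 1
    rw [List.length_cons]
    push_cast
    ring

theorem parity_absLength (w : W) :
    cs.lengthParity w = Multiplicative.ofAdd ((absLength (reflSet cs) w : ZMod 2)) := by
  obtain ⟨l, hl, hp, hlen⟩ := refl_attained cs w
  subst hp
  rw [parity_prod cs hl, hlen]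

theorem ofAdd_injective : Function.Injective (Multiplicative.ofAdd (α := ZMod 2)) :=
  fun _ _ h => h

theorem cast_eq_mod (n m : ℕ) (h : (n : ZMod 2) = (m : ZMod 2)) : n % 2 = m % 2 :=
  (ZMod.natCast_eq_natCast_iff' n m 2).mp h

theorem mod_eq_cast (n m : ℕ) (h : n % 2 = m % 2) : (n : ZMod 2) = (m : ZMod 2) :=
  (ZMod.natCast_eq_natCast_iff' n m 2).mpr h

/-! ### words of every admissible length -/

include i₀ in
theorem refl_pad (w : W) (k : ℕ) :
    ∃ l : List W, (∀ t ∈ l, t ∈ reflSet cs) ∧ l.prod = w ∧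
      l.length = absLength (reflSet cs) w + 2 * k := by
  induction k with
  | zero => simpa using refl_attained cs w
  | succ k ih =>
    obtain ⟨l, hl, hp, hlen⟩ := ih
    refine ⟨l ++ [cs.simple i₀, cs.simple i₀], ?_, ?_, by
      simp only [List.length_append, List.length_cons, List.length_nil, hlen]; omega⟩
    · intro t ht
      rcases List.mem_append.mp ht with h | h
      · exact hl t h
      · rcases (by simpa using h : t = cs.simple i₀ ∨ t = cs.simple i₀) with rfl | rfl <;>
          exact cs.isReflection_simple i₀
    · rw [List.prod_append, hp]
      simp

include i₀ in
theorem exists_refl_list_of_le (w : W) (n : ℕ)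
    (h1 : absLength (reflSet cs) w ≤ n)
    (h2 : n % 2 = absLength (reflSet cs) w % 2) :
    ∃ l : List W, (∀ t ∈ l, t ∈ reflSet cs) ∧ l.prod = w ∧ l.length = n := by
  obtain ⟨k, hk⟩ : ∃ k, n = absLength (reflSet cs) w + 2 * k :=
    ⟨(n - absLength (reflSet cs) w) / 2, by omega⟩
  obtain ⟨l, hl, hp, hlen⟩ := refl_pad cs i₀ w k
  exact ⟨l, hl, hp, by omega⟩

/-! ### powers of S -/

theorem S_pow_even {n : ℕ} (h : n % 2 = 0) : cs.simple i₀ ^ n = 1 := by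
  obtain ⟨k, rfl⟩ : ∃ k, n = 2 * k := ⟨n / 2, by omega⟩
  rw [pow_mul, cs.simple_sq, one_pow]

theorem S_pow_odd {n : ℕ} (h : n % 2 = 1) : cs.simple i₀ ^ n = cs.simple i₀ := by
  obtain ⟨k, rfl⟩ : ∃ k, n = 2 * k + 1 := ⟨n / 2, by omega⟩
  rw [pow_add, pow_mul, cs.simple_sq, one_pow, pow_one, one_mul]

theorem S_pow_cases (n : ℕ) :
    cs.simple i₀ ^ n = 1 ∨ cs.simple i₀ ^ n = cs.simple i₀ := by
  rcases Nat.mod_two_eq_zero_or_one n with h | h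
  · exact Or.inl (S_pow_even cs i₀ h)
  · exact Or.inr (S_pow_odd cs i₀ h)

theorem S_pow_mul_self (n : ℕ) : cs.simple i₀ ^ n * cs.simple i₀ ^ n = 1 := by
  rcases S_pow_cases cs i₀ n with h | h <;> rw [h] <;> simp

/-! ### translation between T₀-words and T-words -/

theorem tzero_list_to_refl (l : List W) (hl : ∀ τ ∈ l, τ ∈ tZero cs i₀) :
    ∃ m : List W, (∀ t ∈ m, t ∈ reflSet cs) ∧ m.length = l.length ∧
      l.prod = cs.simple i₀ ^ l.length * m.prod := by
  induction l with
  | nil => exact ⟨[], by simp, by simp, by simp⟩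
  | cons τ l ih =>
    obtain ⟨m, hm, hmlen, hprod⟩ := ih (fun τ' h => hl τ' (List.mem_cons_of_mem _ h))
    obtain ⟨t, ht, hτ⟩ := hl τ (List.mem_cons_self)
    set S := cs.simple i₀ with hS
    set k := l.length with hk
    refine ⟨(S ^ k * t * (S ^ k)⁻¹) :: m, ?_, by simp [hmlen]; exact hk, ?_⟩
    · intro t' ht'
      rcases List.mem_cons.mp ht' with h | h
      · rw [h]; exact ht.conj _
      · exact hm t' h
    · rw [List.prod_cons, List.prod_cons, hτ, hprod]
      have hSS : S * S = 1 := cs.simple_mul_simple_self i₀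
      show S * t * (S ^ k * m.prod) = S ^ (k + 1) * (S ^ k * t * (S ^ k)⁻¹ * m.prod)
      rcases Nat.mod_two_eq_zero_or_one k with h | h
      · have h1 : S ^ k = 1 := S_pow_even cs i₀ h
        have h2 : S ^ (k + 1) = S := S_pow_odd cs i₀ (by omega)
        rw [h1, h2]; group
      · have h1 : S ^ k = S := S_pow_odd cs i₀ h
        have h2 : S ^ (k + 1) = 1 := S_pow_even cs i₀ (by omega)
        rw [h1, h2, cs.inv_simple]
        simp [hS, mul_assoc]

theorem refl_list_to_tzero (m : List W) (hm : ∀ t ∈ m, t ∈ reflSet cs) :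
    ∃ l : List W, (∀ τ ∈ l, τ ∈ tZero cs i₀) ∧ l.length = m.length ∧
      l.prod = cs.simple i₀ ^ m.length * m.prod := by
  induction m with
  | nil => exact ⟨[], by simp, by simp, by simp⟩
  | cons t m ih =>
    obtain ⟨l, hl, hllen, hprod⟩ := ih (fun t' h => hm t' (List.mem_cons_of_mem _ h))
    have ht : cs.IsReflection t := hm t (List.mem_cons_self)
    set S := cs.simple i₀ with hS
    set k := m.length with hk
    refine ⟨(S * (S ^ k * t * (S ^ k)⁻¹)) :: l, ?_, by simp [hllen]; exact hk, ?_⟩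
    · intro τ' hτ'
      rcases List.mem_cons.mp hτ' with h | h
      · exact ⟨S ^ k * t * (S ^ k)⁻¹, ht.conj _, h⟩
      · exact hl τ' h
    · rw [List.prod_cons, List.prod_cons]
      show S * (S ^ k * t * (S ^ k)⁻¹) * l.prod = S ^ (k + 1) * (t * m.prod)
      rw [hprod]
      have hSS : S * S = 1 := cs.simple_mul_simple_self i₀
      rcases Nat.mod_two_eq_zero_or_one k with h | h
      · have h1 : S ^ k = 1 := S_pow_even cs i₀ h
        have h2 : S ^ (k + 1) = S := S_pow_odd cs i₀ (by omega)
        rw [h1, h2]; group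
      · have h1 : S ^ k = S := S_pow_odd cs i₀ h
        have h2 : S ^ (k + 1) = 1 := S_pow_even cs i₀ (by omega)
        rw [h1, h2, cs.inv_simple, one_mul]
        simp [hS, mul_assoc]

end AbsIsoAux
namespace AbsIsoAux

variable {B W : Type*} [Group W] {M : CoxeterMatrix B} (cs : CoxeterSystem M W) (i₀ : B)

/-! ### parity helpers -/

theorem mem_alt {w : W} : w ∈ alternating cs ↔ cs.lengthParity w = 1 :=
  Iff.rfl

theorem zmod2_cases (z : Multiplicative (ZMod 2)) :
    z = 1 ∨ z = Multiplicative.ofAdd 1 := by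
  revert z; decide

theorem ofAdd_one_ne_one : (Multiplicative.ofAdd (1 : ZMod 2)) ≠ 1 := by decide

theorem absLength_even_of_mem {w : W} (hw : w ∈ alternating cs) :
    absLength (reflSet cs) w % 2 = 0 := by
  have h := parity_absLength cs w
  rw [(mem_alt cs).mp hw] at h
  have h2 : ((absLength (reflSet cs) w : ZMod 2)) = (((0 : ℕ) : ZMod 2)) := by
    have := h.symm
    simpa using ofAdd_injective (by simpa using this)
  have := cast_eq_mod _ _ h2
  omega

theorem absLength_S_mul_odd {w : W} (hw : w ∈ alternating cs) :
    absLength (reflSet cs) (cs.simple i₀ * w) % 2 = 1 := by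
  have h := parity_absLength cs (cs.simple i₀ * w)
  rw [map_mul, (mem_alt cs).mp hw, mul_one, cs.lengthParity_simple] at h
  have h2 : (((1 : ℕ) : ZMod 2)) = ((absLength (reflSet cs) (cs.simple i₀ * w) : ZMod 2)) := by
    simpa using ofAdd_injective (by simpa using h)
  have := cast_eq_mod _ _ h2
  omega

theorem absLength_refl_eq_one {t : W} (ht : cs.IsReflection t) :
    absLength (reflSet cs) t = 1 := by
  have hle : absLength (reflSet cs) t ≤ 1 := by
    simpa using absLength_le (T := reflSet cs) [t] (by simpa [reflSet] using ht) (by simp)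
  rcases Nat.lt_or_ge (absLength (reflSet cs) t) 1 with h | h
  · exfalso
    have h0 : absLength (reflSet cs) t = 0 := by omega
    have hp := parity_absLength cs t
    rw [h0, refl_lengthParity cs ht] at hp
    simp only [Nat.cast_zero, ofAdd_zero] at hp
    exact ofAdd_one_ne_one hp
  · omega

theorem alt_conj_mem {w : W} (hw : w ∈ alternating cs) :
    cs.simple i₀ * w * cs.simple i₀ ∈ alternating cs := by
  rw [mem_alt, map_mul, map_mul, (mem_alt cs).mp hw, cs.lengthParity_simple]
  decide

/-! ### `ℓ₀` as a minimum -/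

theorem tzero_exists {w : W} (hw : w ∈ alternating cs) :
    ∃ l : List W, (∀ τ ∈ l, τ ∈ tZero cs i₀) ∧ l.prod = w := by
  obtain ⟨m, hm, hp, hlen⟩ := refl_attained cs w
  obtain ⟨l, hl, hlen2, hprod⟩ := refl_list_to_tzero cs i₀ m hm
  refine ⟨l, hl, ?_⟩
  rw [hprod, hlen, S_pow_even cs i₀ (absLength_even_of_mem cs hw), one_mul, hp]

theorem tzero_length_eq_min {w : W} (hw : w ∈ alternating cs) :
    absLength (tZero cs i₀) w =
      min (absLength (reflSet cs) w) (absLength (reflSet cs) (cs.simple i₀ * w)) := by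
  have hae : absLength (reflSet cs) w % 2 = 0 := absLength_even_of_mem cs hw
  have hbo : absLength (reflSet cs) (cs.simple i₀ * w) % 2 = 1 :=
    absLength_S_mul_odd cs i₀ hw
  have hle_a : absLength (tZero cs i₀) w ≤ absLength (reflSet cs) w := by
    obtain ⟨m, hm, hp, hlen⟩ := refl_attained cs w
    obtain ⟨l, hl, hlen2, hprod⟩ := refl_list_to_tzero cs i₀ m hm
    have hpl : l.prod = w := by
      rw [hprod, hlen, S_pow_even cs i₀ hae, one_mul, hp]
    have := absLength_le l hl hpl
    omega
  have hle_b : absLength (tZero cs i₀) w ≤ absLength (reflSet cs) (cs.simple i₀ * w) := by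
    obtain ⟨m, hm, hp, hlen⟩ := refl_attained cs (cs.simple i₀ * w)
    obtain ⟨l, hl, hlen2, hprod⟩ := refl_list_to_tzero cs i₀ m hm
    have hpl : l.prod = w := by
      rw [hprod, hlen, S_pow_odd cs i₀ hbo, hp, ← mul_assoc,
        cs.simple_mul_simple_self, one_mul]
    have := absLength_le l hl hpl
    omega
  refine le_antisymm (le_min hle_a hle_b) ?_
  obtain ⟨l0, hl0, hp0⟩ := tzero_exists cs i₀ hw
  obtain ⟨l, hl, hp, hlen⟩ := absLength_exists l0 hl0 hp0
  obtain ⟨m, hm, hmlen, hprod⟩ := tzero_list_to_refl cs i₀ l hl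
  rcases Nat.mod_two_eq_zero_or_one l.length with h | h
  · have hmp : m.prod = w := by
      rw [S_pow_even cs i₀ h, one_mul] at hprod
      rw [← hprod, hp]
    have := absLength_le m hm hmp
    exact le_trans (min_le_left _ _) (by omega)
  · have hmp : m.prod = cs.simple i₀ * w := by
      rw [S_pow_odd cs i₀ h] at hprod
      rw [← hp, hprod, ← mul_assoc, cs.simple_mul_simple_self, one_mul]
    have := absLength_le m hm hmp
    exact le_trans (min_le_right _ _) (by omega)

theorem absLength_mul_S (w : W) :
    absLength (reflSet cs) (w * cs.simple i₀) =
      absLength (reflSet cs) (cs.simple i₀ * w) := by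
  have e : w * cs.simple i₀ = w * (cs.simple i₀ * w) * w⁻¹ := by group
  rw [e, absLength_refl_conj]

theorem tzero_length_conj {w : W} (hw : w ∈ alternating cs) :
    absLength (tZero cs i₀) (cs.simple i₀ * w * cs.simple i₀) =
      absLength (tZero cs i₀) w := by
  rw [tzero_length_eq_min cs i₀ (alt_conj_mem cs i₀ hw), tzero_length_eq_min cs i₀ hw]
  have e2 : cs.simple i₀ * (cs.simple i₀ * w * cs.simple i₀) = w * cs.simple i₀ := by
    simp [← mul_assoc]
  rw [e2]
  have e1 : cs.simple i₀ * w * cs.simple i₀ = cs.simple i₀ * w * (cs.simple i₀)⁻¹ := by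
    rw [cs.inv_simple]
  rw [e1, absLength_refl_conj, absLength_mul_S]

/-! ### cosets -/

theorem mem_H_iff {h : W} :
    h ∈ Subgroup.zpowers (cs.simple i₀) ↔ h = 1 ∨ h = cs.simple i₀ := by
  constructor
  · rintro ⟨k, rfl⟩
    dsimp only
    have hk : (2 : ℤ) * (k / 2) + k % 2 = k := Int.mul_ediv_add_emod k 2
    have h2 : cs.simple i₀ ^ (2 : ℤ) = 1 := by
      rw [show (2 : ℤ) = ((2 : ℕ) : ℤ) by norm_num, zpow_natCast, cs.simple_sq]
    have hsplit : cs.simple i₀ ^ (k : ℤ) = cs.simple i₀ ^ (k % 2) := by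
      conv_lhs => rw [← hk]
      rw [zpow_add, zpow_mul, h2, one_zpow, one_mul]
    have : k % 2 = 0 ∨ k % 2 = 1 := by omega
    rcases this with h | h
    · left; rw [hsplit, h, zpow_zero]
    · right; rw [hsplit, h, zpow_one]
  · rintro (rfl | rfl)
    · exact one_mem _
    · exact Subgroup.mem_zpowers _

theorem coset_eq_iff (v w : W) :
    ((v : W ⧸ Subgroup.zpowers (cs.simple i₀)) =
        (w : W ⧸ Subgroup.zpowers (cs.simple i₀))) ↔
      w = v ∨ w = v * cs.simple i₀ := by
  rw [QuotientGroup.eq, mem_H_iff cs i₀]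
  constructor
  · rintro (h | h)
    · left; exact (inv_mul_eq_one.mp h).symm
    · right; rw [← h, ← mul_assoc, mul_inv_cancel, one_mul]
  · rintro (rfl | rfl)
    · left; exact inv_mul_cancel _
    · right; rw [← mul_assoc, inv_mul_cancel, one_mul]

theorem smul_mk' (g a : W) :
    (g • ((a : W ⧸ Subgroup.zpowers (cs.simple i₀)))) =
      ((g * a : W) : W ⧸ Subgroup.zpowers (cs.simple i₀)) := rfl

theorem cosetLength_le {T : Set W} {H : Subgroup W} {x : W ⧸ H} (w : W)
    (hw : (w : W ⧸ H) = x) : cosetLength T H x ≤ absLength T w :=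
  Nat.sInf_le ⟨w, hw, rfl⟩

theorem cosetLength_exists (T : Set W) (H : Subgroup W) (x : W ⧸ H) :
    ∃ w : W, (w : W ⧸ H) = x ∧ absLength T w = cosetLength T H x := by
  obtain ⟨u, hu⟩ := QuotientGroup.mk_surjective x
  have hne : {n | ∃ w : W, (w : W ⧸ H) = x ∧ absLength T w = n}.Nonempty :=
    ⟨absLength T u, u, hu, rfl⟩
  exact Nat.sInf_mem hne

theorem cosetLength_coset (w : W) :
    cosetLength (reflSet cs) (Subgroup.zpowers (cs.simple i₀))
        ((w : W ⧸ Subgroup.zpowers (cs.simple i₀))) =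
      min (absLength (reflSet cs) w) (absLength (reflSet cs) (cs.simple i₀ * w)) := by
  refine le_antisymm (le_min ?_ ?_) ?_
  · exact cosetLength_le w rfl
  · refine le_trans (cosetLength_le (w * cs.simple i₀) ?_) ?_
    · exact (coset_eq_iff cs i₀ (w * cs.simple i₀) w).mpr (Or.inr (by simp [mul_assoc]))
    · rw [absLength_mul_S]
  · obtain ⟨v, hv, hvlen⟩ :=
      cosetLength_exists (reflSet cs) (Subgroup.zpowers (cs.simple i₀)) (↑w)
    rw [← hvlen]
    rcases (coset_eq_iff cs i₀ v w).mp hv with h | h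
    · rw [h]; exact min_le_left _ _
    · have hv2 : v = w * cs.simple i₀ := by rw [h]; simp [mul_assoc]
      rw [hv2, absLength_mul_S]
      exact min_le_right _ _

theorem cosetLength_smul_le (g : W) (x : W ⧸ Subgroup.zpowers (cs.simple i₀)) :
    cosetLength (reflSet cs) (Subgroup.zpowers (cs.simple i₀)) (g • x) ≤
      absLength (reflSet cs) g +
        cosetLength (reflSet cs) (Subgroup.zpowers (cs.simple i₀)) x := by
  obtain ⟨a, ha, halen⟩ :=
    cosetLength_exists (reflSet cs) (Subgroup.zpowers (cs.simple i₀)) x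
  have h1 : ((g * a : W) : W ⧸ Subgroup.zpowers (cs.simple i₀)) = g • x := by
    rw [← ha, smul_mk']
  have h2 := cosetLength_le (T := reflSet cs) (g * a) h1
  have h3 := absLength_refl_mul_le cs g a
  omega

theorem cosetLe_refl (x : W ⧸ Subgroup.zpowers (cs.simple i₀)) :
    cosetLe (reflSet cs) (Subgroup.zpowers (cs.simple i₀)) x x :=
  ⟨1, (one_smul _ _).symm, by rw [absLength_one]; omega⟩

theorem cosetLe_trans {x y z : W ⧸ Subgroup.zpowers (cs.simple i₀)}
    (h1 : cosetLe (reflSet cs) (Subgroup.zpowers (cs.simple i₀)) x y)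
    (h2 : cosetLe (reflSet cs) (Subgroup.zpowers (cs.simple i₀)) y z) :
    cosetLe (reflSet cs) (Subgroup.zpowers (cs.simple i₀)) x z := by
  obtain ⟨w1, hw1, hl1⟩ := h1
  obtain ⟨w2, hw2, hl2⟩ := h2
  refine ⟨w2 * w1, by rw [hw2, hw1, smul_smul], ?_⟩
  have hle := absLength_refl_mul_le cs w2 w1
  have hge := cosetLength_smul_le cs i₀ (w2 * w1) x
  rw [← smul_smul, ← hw1, ← hw2] at hge
  omega

end AbsIsoAux
namespace AbsIsoAux

variable {B W : Type*} [Group W] {M : CoxeterMatrix B} (cs : CoxeterSystem M W) (i₀ : B)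

section Phi

variable (φ : W → W ⧸ Subgroup.zpowers (cs.simple i₀))
variable (hφ : ∀ w : W, φ w =
      if Even (absLength (tZero cs i₀) w)
      then (w : W ⧸ Subgroup.zpowers (cs.simple i₀))
      else ((cs.simple i₀ * w * cs.simple i₀ : W) : W ⧸ Subgroup.zpowers (cs.simple i₀)))
include hφ

theorem phi_even {w : W} (h : Even (absLength (tZero cs i₀) w)) :
    φ w = (w : W ⧸ Subgroup.zpowers (cs.simple i₀)) := by
  rw [hφ, if_pos h]

theorem phi_odd {w : W} (h : ¬ Even (absLength (tZero cs i₀) w)) :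
    φ w = ((cs.simple i₀ * w : W) : W ⧸ Subgroup.zpowers (cs.simple i₀)) := by
  rw [hφ, if_neg h]
  exact (coset_eq_iff cs i₀ _ _).mpr (Or.inr (by simp [mul_assoc]))

theorem phi_cosetLength {w : W} (hw : w ∈ alternating cs) :
    cosetLength (reflSet cs) (Subgroup.zpowers (cs.simple i₀)) (φ w) =
      absLength (tZero cs i₀) w := by
  by_cases h : Even (absLength (tZero cs i₀) w)
  · rw [phi_even cs i₀ φ hφ h, cosetLength_coset cs i₀ w, ← tzero_length_eq_min cs i₀ hw]
  · rw [phi_odd cs i₀ φ hφ h, cosetLength_coset cs i₀ (cs.simple i₀ * w)]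
    have e : cs.simple i₀ * (cs.simple i₀ * w) = w := by simp [← mul_assoc]
    rw [e, tzero_length_eq_min cs i₀ hw, Nat.min_comm]

omit hφ in
theorem alt_coset_unique {u v : W} (hu : u ∈ alternating cs) (hv : v ∈ alternating cs)
    (h : (u : W ⧸ Subgroup.zpowers (cs.simple i₀)) =
      (v : W ⧸ Subgroup.zpowers (cs.simple i₀))) : u = v := by
  rcases (coset_eq_iff cs i₀ u v).mp h with h1 | h1
  · exact h1.symm
  · exfalso
    have hv' : cs.lengthParity v = 1 := (mem_alt cs).mp hv
    rw [h1, map_mul, (mem_alt cs).mp hu, cs.lengthParity_simple, one_mul] at hv'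
    exact ofAdd_one_ne_one hv'

theorem phi_inj {u v : W} (hu : u ∈ alternating cs) (hv : v ∈ alternating cs)
    (h : φ u = φ v) : u = v := by
  by_cases h1 : Even (absLength (tZero cs i₀) u) <;>
    by_cases h2 : Even (absLength (tZero cs i₀) v)
  · rw [phi_even cs i₀ φ hφ h1, phi_even cs i₀ φ hφ h2] at h
    exact alt_coset_unique cs i₀ hu hv h
  · rw [phi_even cs i₀ φ hφ h1, hφ v, if_neg h2] at h
    have heq := alt_coset_unique cs i₀ hu (alt_conj_mem cs i₀ hv) h
    exfalso
    apply h2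
    rw [← tzero_length_conj cs i₀ hv, ← heq]
    exact h1
  · rw [hφ u, if_neg h1, phi_even cs i₀ φ hφ h2] at h
    have heq := alt_coset_unique cs i₀ (alt_conj_mem cs i₀ hu) hv h
    exfalso
    apply h1
    rw [← tzero_length_conj cs i₀ hu, heq]
    exact h2
  · rw [hφ u, if_neg h1, hφ v, if_neg h2] at h
    have heq := alt_coset_unique cs i₀ (alt_conj_mem cs i₀ hu) (alt_conj_mem cs i₀ hv) h
    exact mul_left_cancel (mul_right_cancel heq)

theorem phi_surj (x : W ⧸ Subgroup.zpowers (cs.simple i₀)) :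
    ∃ u, u ∈ alternating cs ∧ φ u = x := by
  obtain ⟨w, rfl⟩ := QuotientGroup.mk_surjective x
  have hrep : ∃ u, u ∈ alternating cs ∧
      (u : W ⧸ Subgroup.zpowers (cs.simple i₀)) = (w : W ⧸ Subgroup.zpowers (cs.simple i₀)) := by
    by_cases hw : w ∈ alternating cs
    · exact ⟨w, hw, rfl⟩
    · refine ⟨w * cs.simple i₀, ?_, ?_⟩
      · have hwp : cs.lengthParity w = Multiplicative.ofAdd 1 := by
          rcases zmod2_cases (cs.lengthParity w) with h | h
          · exact absurd ((mem_alt cs).mpr h) hw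
          · exact h
        rw [mem_alt, map_mul, hwp, cs.lengthParity_simple]
        decide
      · exact (coset_eq_iff cs i₀ _ _).mpr (Or.inr (by simp [mul_assoc]))
  obtain ⟨u, hu, hux⟩ := hrep
  by_cases h : Even (absLength (tZero cs i₀) u)
  · exact ⟨u, hu, by rw [phi_even cs i₀ φ hφ h, hux]⟩
  · refine ⟨cs.simple i₀ * u * cs.simple i₀, alt_conj_mem cs i₀ hu, ?_⟩
    have hq : ¬ Even (absLength (tZero cs i₀) (cs.simple i₀ * u * cs.simple i₀)) := by
      rwa [tzero_length_conj cs i₀ hu]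
    rw [hφ, if_neg hq]
    have e : cs.simple i₀ * (cs.simple i₀ * u * cs.simple i₀) * cs.simple i₀ = u := by
      simp [mul_assoc]
    rw [e, hux]

theorem forward_step {u v : W} (hu : u ∈ alternating cs) (hv : v ∈ alternating cs)
    (τ : W) (hτ0 : τ ∈ tZero cs i₀) (hvτ : v = τ * u)
    (hlt : absLength (tZero cs i₀) u < absLength (tZero cs i₀) v) :
    cosetLe (reflSet cs) (Subgroup.zpowers (cs.simple i₀)) (φ u) (φ v) := by
  obtain ⟨t, ht, hτ⟩ := hτ0
  have hv1 : absLength (tZero cs i₀) v ≤ absLength (tZero cs i₀) u + 1 := by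
    obtain ⟨l0, hl0, hp0⟩ := tzero_exists cs i₀ hu
    obtain ⟨l, hl, hp, hlen'⟩ := absLength_exists l0 hl0 hp0
    have hmem : ∀ t' ∈ τ :: l, t' ∈ tZero cs i₀ := by
      intro t' ht'
      rcases List.mem_cons.mp ht' with h | h
      · exact ⟨t, ht, by rw [h, hτ]⟩
      · exact hl t' h
    have hprod : (τ :: l).prod = v := by rw [List.prod_cons, hp, hvτ]
    have := absLength_le (τ :: l) hmem hprod
    simp only [List.length_cons, hlen'] at this
    omega
  have heq : absLength (tZero cs i₀) v = absLength (tZero cs i₀) u + 1 := by omega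
  have haLt : absLength (reflSet cs) t = 1 := absLength_refl_eq_one cs ht
  by_cases h : Even (absLength (tZero cs i₀) u)
  · have h2 : ¬ Even (absLength (tZero cs i₀) v) := by
      rw [heq]; simp [Nat.even_add_one, h]
    refine ⟨t, ?_, ?_⟩
    · rw [phi_even cs i₀ φ hφ h, phi_odd cs i₀ φ hφ h2, smul_mk', hvτ, hτ]
      have e : cs.simple i₀ * (cs.simple i₀ * t * u) = t * u := by simp [← mul_assoc]
      rw [e]
    · rw [phi_cosetLength cs i₀ φ hφ hu, phi_cosetLength cs i₀ φ hφ hv, haLt, heq]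
  · have h2 : Even (absLength (tZero cs i₀) v) := by
      rw [heq]; simp [Nat.even_add_one, h]
    refine ⟨cs.simple i₀ * t * cs.simple i₀, ?_, ?_⟩
    · rw [phi_odd cs i₀ φ hφ h, phi_even cs i₀ φ hφ h2, smul_mk', hvτ, hτ]
      have e : cs.simple i₀ * t * cs.simple i₀ * (cs.simple i₀ * u) = cs.simple i₀ * t * u := by
        simp [mul_assoc]
      rw [e]
    · rw [phi_cosetLength cs i₀ φ hφ hu, phi_cosetLength cs i₀ φ hφ hv, heq]
      have e : cs.simple i₀ * t * cs.simple i₀ = cs.simple i₀ * t * (cs.simple i₀)⁻¹ := by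
        rw [cs.inv_simple]
      rw [e, absLength_refl_conj, haLt]

theorem step_back {u v t : W} (hu : u ∈ alternating cs) (hv : v ∈ alternating cs)
    (ht : cs.IsReflection t) (heq : φ v = t • φ u)
    (hlen : absLength (tZero cs i₀) v = absLength (tZero cs i₀) u + 1) :
    ∃ τ ∈ tZero cs i₀, v = τ * u := by
  have hu1 : cs.lengthParity u = 1 := (mem_alt cs).mp hu
  have hv1 : cs.lengthParity v = 1 := (mem_alt cs).mp hv
  by_cases h : Even (absLength (tZero cs i₀) u)
  · have h2 : ¬ Even (absLength (tZero cs i₀) v) := by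
      rw [hlen]; simp [Nat.even_add_one, h]
    rw [phi_odd cs i₀ φ hφ h2, phi_even cs i₀ φ hφ h, smul_mk'] at heq
    rcases (coset_eq_iff cs i₀ _ _).mp heq with h3 | h3
    · -- h3 : t * u = cs.simple i₀ * v
      refine ⟨cs.simple i₀ * t, ⟨t, ht, rfl⟩, ?_⟩
      calc v = cs.simple i₀ * (cs.simple i₀ * v) := by simp [← mul_assoc]
        _ = cs.simple i₀ * (t * u) := by rw [← h3]
        _ = cs.simple i₀ * t * u := by rw [mul_assoc]
    · exfalso
      have hc := congrArg cs.lengthParity h3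
      rw [map_mul, map_mul, map_mul, refl_lengthParity cs ht, hu1, cs.lengthParity_simple,
        hv1] at hc
      revert hc; decide
  · have h2 : Even (absLength (tZero cs i₀) v) := by
      rw [hlen]; simp [Nat.even_add_one, h]
    rw [phi_even cs i₀ φ hφ h2, phi_odd cs i₀ φ hφ h, smul_mk'] at heq
    rcases (coset_eq_iff cs i₀ _ _).mp heq with h3 | h3
    · -- h3 : t * (cs.simple i₀ * u) = v
      have htc : cs.IsReflection (cs.simple i₀ * t * cs.simple i₀) := by
        have := ht.conj (cs.simple i₀)
        rwa [cs.inv_simple] at this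
      refine ⟨cs.simple i₀ * (cs.simple i₀ * t * cs.simple i₀),
        ⟨cs.simple i₀ * t * cs.simple i₀, htc, rfl⟩, ?_⟩
      rw [← h3]
      simp [mul_assoc]
    · exfalso
      have hc := congrArg cs.lengthParity h3
      rw [map_mul, map_mul, map_mul, refl_lengthParity cs ht, hu1, cs.lengthParity_simple,
        hv1] at hc
      revert hc; decide

theorem backward (m : List W) (hm : ∀ t ∈ m, t ∈ reflSet cs) :
    ∀ u v : W, u ∈ alternating cs → v ∈ alternating cs →
      φ v = m.prod • φ u →
      absLength (tZero cs i₀) u + m.length = absLength (tZero cs i₀) v →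
      altLe cs i₀ u v := by
  induction m with
  | nil =>
    intro u v hu hv heq hlen
    have h : φ v = φ u := by rwa [List.prod_nil, one_smul] at heq
    have := phi_inj cs i₀ φ hφ hv hu h
    rw [this]
    exact Relation.ReflTransGen.refl
  | cons t m ih =>
    intro u v hu hv heq hlen
    have hm' : ∀ t' ∈ m, t' ∈ reflSet cs := fun t' h => hm t' (List.mem_cons_of_mem _ h)
    have ht : cs.IsReflection t := hm t (List.mem_cons_self)
    rw [List.prod_cons, ← smul_smul] at heq
    obtain ⟨u', hu', hphiu'⟩ := phi_surj cs i₀ φ hφ (m.prod • φ u)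
    have h1 : cosetLength (reflSet cs) (Subgroup.zpowers (cs.simple i₀)) (m.prod • φ u) ≤
        absLength (tZero cs i₀) u + m.length := by
      have ha := cosetLength_smul_le cs i₀ m.prod (φ u)
      have hb := absLength_le (T := reflSet cs) m hm' rfl
      rw [phi_cosetLength cs i₀ φ hφ hu] at ha
      omega
    have h2 : absLength (tZero cs i₀) v ≤
        cosetLength (reflSet cs) (Subgroup.zpowers (cs.simple i₀)) (m.prod • φ u) + 1 := by
      have ha := cosetLength_smul_le cs i₀ t (m.prod • φ u)
      rw [← heq, phi_cosetLength cs i₀ φ hφ hv] at ha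
      have hb := absLength_refl_eq_one cs ht
      omega
    rw [List.length_cons] at hlen
    have hxlen : cosetLength (reflSet cs) (Subgroup.zpowers (cs.simple i₀)) (m.prod • φ u) =
        absLength (tZero cs i₀) u + m.length := by omega
    have hu'len : absLength (tZero cs i₀) u' = absLength (tZero cs i₀) u + m.length := by
      rw [← phi_cosetLength cs i₀ φ hφ hu', hphiu', hxlen]
    have step1 : altLe cs i₀ u u' :=
      ih hm' u u' hu hu' hphiu' (by omega)
    obtain ⟨τ, hτ, hvτ⟩ := step_back cs i₀ φ hφ hu' hv ht (by rw [hphiu', ← heq])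
      (by omega)
    exact Relation.ReflTransGen.tail step1 ⟨hu', hv, τ, hτ, hvτ, by omega⟩

end Phi

end AbsIsoAux
/-!
Statement 18: the absolute order Abs₀(W⁺) is isomorphic as a poset to the absolute order
Abs(W/⟨s₀⟩) on the set of left cosets of ⟨s₀⟩, an isomorphism being given by
φ(w) = w⟨s₀⟩ if ℓ_{T₀}(w) is even and φ(w) = s₀ w s₀⟨s₀⟩ if ℓ_{T₀}(w) is odd.
-/
open AbsIsoAux in
theorem alt_abs_iso_coset_abs {B W : Type*} [Group W] {M : CoxeterMatrix B}
    (cs : CoxeterSystem M W) (i₀ : B)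
    (φ : W → W ⧸ Subgroup.zpowers (cs.simple i₀))
    (hφ : ∀ w : W, φ w =
      if Even (absLength (tZero cs i₀) w)
      then (w : W ⧸ Subgroup.zpowers (cs.simple i₀))
      else ((cs.simple i₀ * w * cs.simple i₀ : W) : W ⧸ Subgroup.zpowers (cs.simple i₀))) :
    -- φ restricts to a bijection from W⁺ onto W/⟨s₀⟩,
    Set.BijOn φ {w : W | w ∈ alternating cs} Set.univ ∧
    -- which is an isomorphism of the absolute orders:
    ∀ u ∈ alternating cs, ∀ v ∈ alternating cs,
      (altLe cs i₀ u v ↔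
        cosetLe (reflSet cs) (Subgroup.zpowers (cs.simple i₀)) (φ u) (φ v)) := by
  constructor
  · refine ⟨fun w _ => Set.mem_univ _, ?_, ?_⟩
    · intro u hu v hv h
      exact phi_inj cs i₀ φ hφ hu hv h
    · intro x _
      obtain ⟨u, hu, hux⟩ := phi_surj cs i₀ φ hφ x
      exact ⟨u, hu, hux⟩
  · intro u hu v hv
    constructor
    · intro h
      clear hv
      induction h with
      | refl => exact cosetLe_refl cs i₀ _
      | tail h1 h2 ih =>
        obtain ⟨hb, hc, τ, hτ, hcb, hlt⟩ := h2
        exact cosetLe_trans cs i₀ ih (forward_step cs i₀ φ hφ hb hc τ hτ hcb hlt)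
    · intro h
      obtain ⟨w, hw, hlen⟩ := h
      obtain ⟨m, hm, hp, hmlen⟩ := refl_attained cs w
      refine backward cs i₀ φ hφ m hm u v hu hv ?_ ?_
      · rw [hw, hp]
      · rw [phi_cosetLength cs i₀ φ hφ hu, phi_cosetLength cs i₀ φ hφ hv] at hlen
        omega
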